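/- Fix a real number p with 0 < p < 1 and 1 − p² + 2p³ − p⁴ ≠ 0. Consider the linear system in the five real unknowns (ĝ, x₀₁, x₁₁, x₁₂, x₂₂): (i) 0 = p·(1 − ĝ) + (1−p)·x₀₁ − ĝ·(1−p); (ii) x₀₁ = p·x₁₁ + (1−p)·x₀₁ − ĝ·(1−p); (iii) x₁₁ = p·(2 − ĝ) + (1−p)·x₁₂ − ĝ·(1−p); (iv) x₁₂ = p·x₂₂ + (1−p)·x₀₁ − ĝ·(1−p); (v) x₂₂ = p·(3 − ĝ) + (1−p)·x₀₁ − ĝ·(1−p). This system has a unique solution, and in it ĝ = p²·(2 + 2p − 5p² + 2p³)/(1 − p² + 2p³ − p⁴) and x₀₁ = (ĝ − p)/(1 − p). -/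

import Mathlib

/-- Auxiliary: the elimination identity for `g` in the linear system. -/
lemma deviating_key_g (p g x01 x11 x12 x22 : ℝ)
    (h1 : 0 = p * (1 - g) + (1 - p) * x01 - g * (1 - p))
    (h2 : x01 = p * x11 + (1 - p) * x01 - g * (1 - p))
    (h3 : x11 = p * (2 - g) + (1 - p) * x12 - g * (1 - p))
    (h4 : x12 = p * x22 + (1 - p) * x01 - g * (1 - p))
    (h5 : x22 = p * (3 - g) + (1 - p) * x01 - g * (1 - p)) :
    g * (1 - p ^ 2 + 2 * p ^ 3 - p ^ 4)
      = p ^ 2 * (2 + 2 * p - 5 * p ^ 2 + 2 * p ^ 3) := by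
  linear_combination (p * (1 - (1 - p) ^ 2 - p * (1 - p) ^ 2)) * h1
    + (1 - p) * h2 + (p * (1 - p)) * h3 + (p * (1 - p) ^ 2) * h4
    + (p ^ 2 * (1 - p) ^ 2) * h5

/-- For `0 < p < 1` with `1 − p² + 2p³ − p⁴ ≠ 0`, the linear system defining
the potential of the deviating strategy with mining states
`{(0,0), (0,1), (1,1), (1,2), (2,2)}` and capitulation landing state `s = 1`
in the immediate-release game truncated at `d = 3` — in the unknowns
`(ĝ, x₀₁, x₁₁, x₁₂, x₂₂)`:
(i)   `0 = p(1 − ĝ) + (1−p)x₀₁ − ĝ(1−p)`;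
(ii)  `x₀₁ = p·x₁₁ + (1−p)x₀₁ − ĝ(1−p)`;
(iii) `x₁₁ = p(2 − ĝ) + (1−p)x₁₂ − ĝ(1−p)`;
(iv)  `x₁₂ = p·x₂₂ + (1−p)x₀₁ − ĝ(1−p)`;
(v)   `x₂₂ = p(3 − ĝ) + (1−p)x₀₁ − ĝ(1−p)` —
has a unique solution, in which
`ĝ = p²(2 + 2p − 5p² + 2p³)/(1 − p² + 2p³ − p⁴)` and `x₀₁ = (ĝ − p)/(1 − p)`. -/
theorem deviating_strategy_potential_system (p : ℝ) (hp0 : 0 < p) (hp1 : p < 1)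
    (hden : 1 - p ^ 2 + 2 * p ^ 3 - p ^ 4 ≠ 0) :
    (∃! v : ℝ × ℝ × ℝ × ℝ × ℝ,
      0 = p * (1 - v.1) + (1 - p) * v.2.1 - v.1 * (1 - p)
      ∧ v.2.1 = p * v.2.2.1 + (1 - p) * v.2.1 - v.1 * (1 - p)
      ∧ v.2.2.1 = p * (2 - v.1) + (1 - p) * v.2.2.2.1 - v.1 * (1 - p)
      ∧ v.2.2.2.1 = p * v.2.2.2.2 + (1 - p) * v.2.1 - v.1 * (1 - p)
      ∧ v.2.2.2.2 = p * (3 - v.1) + (1 - p) * v.2.1 - v.1 * (1 - p))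
    ∧ ∀ g x01 x11 x12 x22 : ℝ,
        0 = p * (1 - g) + (1 - p) * x01 - g * (1 - p) →
        x01 = p * x11 + (1 - p) * x01 - g * (1 - p) →
        x11 = p * (2 - g) + (1 - p) * x12 - g * (1 - p) →
        x12 = p * x22 + (1 - p) * x01 - g * (1 - p) →
        x22 = p * (3 - g) + (1 - p) * x01 - g * (1 - p) →
        g = p ^ 2 * (2 + 2 * p - 5 * p ^ 2 + 2 * p ^ 3)
              / (1 - p ^ 2 + 2 * p ^ 3 - p ^ 4)
          ∧ x01 = (g - p) / (1 - p) := by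
  have hq : (1 : ℝ) - p ≠ 0 := by linarith
  obtain ⟨G, hGdef⟩ : ∃ G : ℝ, G = p ^ 2 * (2 + 2 * p - 5 * p ^ 2 + 2 * p ^ 3)
      / (1 - p ^ 2 + 2 * p ^ 3 - p ^ 4) := ⟨_, rfl⟩
  have hG : G * (1 - p ^ 2 + 2 * p ^ 3 - p ^ 4)
      = p ^ 2 * (2 + 2 * p - 5 * p ^ 2 + 2 * p ^ 3) := by
    rw [hGdef]; exact div_mul_cancel₀ _ hden
  obtain ⟨X01, hX01⟩ : ∃ X : ℝ, (1 - p) * X = G - p :=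
    ⟨(G - p) / (1 - p), by field_simp⟩
  obtain ⟨X22, hX22⟩ : ∃ X : ℝ,
      X = p * (3 - G) + (1 - p) * X01 - G * (1 - p) := ⟨_, rfl⟩
  obtain ⟨X12, hX12⟩ : ∃ X : ℝ,
      X = p * X22 + (1 - p) * X01 - G * (1 - p) := ⟨_, rfl⟩
  obtain ⟨X11, hX11⟩ : ∃ X : ℝ,
      X = p * (2 - G) + (1 - p) * X12 - G * (1 - p) := ⟨_, rfl⟩
  constructor
  · refine ⟨(G, X01, X11, X12, X22), ⟨?_, ?_, ?_, ?_, ?_⟩, ?_⟩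
    · show (0 : ℝ) = p * (1 - G) + (1 - p) * X01 - G * (1 - p)
      linear_combination -hX01
    · show X01 = p * X11 + (1 - p) * X01 - G * (1 - p)
      have hE2 : (1 - p) *
          (X01 - (p * X11 + (1 - p) * X01 - G * (1 - p))) = 0 := by
        linear_combination hG + (p * (1 - (1 - p) ^ 2 - p * (1 - p) ^ 2)) * hX01
          - (p * (1 - p)) * hX11 - (p * (1 - p) ^ 2) * hX12
          - (p ^ 2 * (1 - p) ^ 2) * hX22
      rcases mul_eq_zero.mp hE2 with h | h
      · exact absurd h hq
      · linarith [sub_eq_zero.mp h]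
    · exact hX11
    · exact hX12
    · exact hX22
    · rintro ⟨g, x01, x11, x12, x22⟩ ⟨h1, h2, h3, h4, h5⟩
      dsimp only at h1 h2 h3 h4 h5 ⊢
      have hg : g = G := by
        have hk := deviating_key_g p g x01 x11 x12 x22 h1 h2 h3 h4 h5
        have : (g - G) * (1 - p ^ 2 + 2 * p ^ 3 - p ^ 4) = 0 := by
          linear_combination hk - hG
        rcases mul_eq_zero.mp this with h | h
        · linarith [sub_eq_zero.mp h]
        · exact absurd h hden
      subst hg
      have hx01 : x01 = X01 := by
        have : (1 - p) * (x01 - X01) = 0 := by linear_combination -h1 - hX01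
        rcases mul_eq_zero.mp this with h | h
        · exact absurd h hq
        · linarith [sub_eq_zero.mp h]
      subst hx01
      have hx22 : x22 = X22 := by rw [hX22, h5]
      subst hx22
      have hx12 : x12 = X12 := by rw [hX12, h4]
      subst hx12
      have hx11 : x11 = X11 := by rw [hX11, h3]
      rw [hx11]
  · intro g x01 x11 x12 x22 h1 h2 h3 h4 h5
    have hg := deviating_key_g p g x01 x11 x12 x22 h1 h2 h3 h4 h5
    constructor
    · rw [eq_div_iff hden]
      linear_combination hg
    · field_simp
      linear_combination -(1 : ℝ) * h1
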